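/- arXiv:2510.01911 — 2 statements merged into one kernel-verified Lean document; each statement's English description precedes it below -/
import Mathlib

section
/- For every x ∈ D and each i ∈ {1,2}, ∫_{∂D} ln|x − y| · y_i dσ(y) = −πR x_i. -/
open MeasureTheory Set Complex
open scoped NNReal ENNReal
set_option maxHeartbeats 800000

noncomputable section

namespace DiskLog

lemma abs_exp_sub_exp (s t : ℝ) :
    ‖Complex.exp (s * I) - Complex.exp (t * I)‖
      = 2 * |Real.sin ((s - t) / 2)| := by
  have e1 : ((s : ℂ) * I) = ((((s + t) / 2 : ℝ)) : ℂ) * I + ((((s - t) / 2 : ℝ)) : ℂ) * I := by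
    push_cast; ring
  have e2 : ((t : ℂ) * I) = ((((s + t) / 2 : ℝ)) : ℂ) * I + -((((s - t) / 2 : ℝ)) : ℂ) * I := by
    push_cast; ring
  rw [e1, e2, Complex.exp_add, Complex.exp_add, ← mul_sub]
  have e3 : Complex.exp ((((s - t) / 2 : ℝ)) * I) - Complex.exp (-(((s - t) / 2 : ℝ)) * I)
      = (2 * Real.sin ((s - t) / 2)) * I := by
    rw [show (-((((s - t) / 2 : ℝ)) : ℂ) * I) = ((-((s - t) / 2) : ℝ) : ℂ) * I by push_cast; ring]
    rw [Complex.exp_mul_I, Complex.exp_mul_I]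
    rw [show ((( -((s - t) / 2) : ℝ)) : ℂ) = -((((s - t) / 2 : ℝ)) : ℂ) by push_cast; ring]
    rw [Complex.cos_neg, Complex.sin_neg]
    rw [show ((((s - t) / 2 : ℝ)) : ℂ) = (((s - t) / 2 : ℝ) : ℂ) from rfl]
    rw [← Complex.ofReal_sin]
    push_cast
    ring
  rw [e3, norm_mul, Complex.norm_exp_ofReal_mul_I, norm_mul, norm_mul, Complex.norm_I,
    Complex.norm_real, Real.norm_eq_abs, Complex.norm_two]
  ring

lemma dist_circleMap (R : ℝ) (hR : 0 ≤ R) (s t : ℝ) :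
    dist (circleMap 0 R s) (circleMap 0 R t) = 2 * R * |Real.sin ((s - t) / 2)| := by
  rw [Complex.dist_eq]
  simp only [circleMap_zero]
  rw [← mul_sub, norm_mul, Complex.norm_real, Real.norm_eq_abs, _root_.abs_of_nonneg hR, abs_exp_sub_exp]
  ring

lemma sin_lower {u δ : ℝ} (hu : 0 ≤ u) (huδ : u ≤ δ) (hδ : δ ≤ 1) :
    (1 - δ ^ 2) * u ≤ 2 * Real.sin (u / 2) := by
  rcases eq_or_lt_of_le hu with rfl | hu'
  · simp
  · have h := Real.sin_gt_sub_cube (by linarith : (0:ℝ) < u / 2)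
    nlinarith [sq_nonneg u, sq_nonneg δ, sq_nonneg (δ - u), mul_pos hu' hu']

lemma injOn_circleMap (R : ℝ) (hR : R ≠ 0) {a b : ℝ} (h : b - a ≤ 2 * Real.pi) :
    InjOn (circleMap 0 R) (Ioc a b) := by
  intro s hs t ht hst
  simp only [circleMap_zero] at hst
  have hst' : Complex.exp (s * I) = Complex.exp (t * I) :=
    mul_left_cancel₀ (by exact_mod_cast hR : (R : ℂ) ≠ 0) hst
  rw [Complex.exp_eq_exp_iff_exists_int] at hst'
  obtain ⟨n, hn⟩ := hst'
  have h2 : ((s - t - n * (2 * Real.pi) : ℝ) : ℂ) * I = 0 := by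
    push_cast
    linear_combination hn
  have h3 : s - t - n * (2 * Real.pi) = 0 := by
    rcases mul_eq_zero.1 h2 with h4 | h4
    · exact_mod_cast h4
    · exact absurd h4 I_ne_zero
  have hlt : |s - t| < 2 * Real.pi := by
    rw [abs_sub_lt_iff]
    constructor <;> nlinarith [hs.1, hs.2, ht.1, ht.2, Real.pi_pos]
  have hn0 : n = 0 := by
    by_contra hn0
    have : (1 : ℝ) ≤ |(n : ℝ)| := by
      rw [← Int.cast_abs]
      exact_mod_cast Int.one_le_abs (by exact_mod_cast hn0)
    have : 2 * Real.pi ≤ |(n : ℝ)| * (2 * Real.pi) := by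
      nlinarith [Real.pi_pos]
    rw [show s - t = n * (2 * Real.pi) by linarith] at hlt
    rw [abs_mul, abs_of_pos (by positivity : (0:ℝ) < 2 * Real.pi)] at hlt
    linarith
  rw [hn0] at h3
  push_cast at h3
  linarith

lemma arc_measurableSet (R a b : ℝ) : MeasurableSet (circleMap 0 R '' Ioc a b) := by
  have h1 : circleMap 0 R '' Ioc a b
      = (circleMap 0 R '' Icc a b) \ ({circleMap 0 R a} \ circleMap 0 R '' Ioc a b) := by
    ext w
    constructor
    · intro hw
      exact ⟨image_mono Ioc_subset_Icc_self hw, fun hc => hc.2 hw⟩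
    · rintro ⟨⟨s, hs, rfl⟩, hw⟩
      rcases eq_or_ne s a with rfl | hsa
      · by_contra hmem
        exact hw ⟨rfl, hmem⟩
      · exact ⟨s, ⟨lt_of_le_of_ne hs.1 (Ne.symm hsa), hs.2⟩, rfl⟩
  rw [h1]
  exact ((isCompact_Icc.image (continuous_circleMap 0 R)).isClosed.measurableSet).diff
    ((Set.subsingleton_singleton.anti diff_subset).measurableSet)

lemma arc_le (R : ℝ) (hR : 0 ≤ R) (a b : ℝ) :
    μH[1] (circleMap 0 R '' Ioc a b) ≤ ENNReal.ofReal (R * (b - a)) := by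
  have h := (lipschitzWith_circleMap 0 R).hausdorffMeasure_image_le zero_le_one (Ioc a b)
  rw [MeasureTheory.hausdorffMeasure_real, Real.volume_Ioc, ENNReal.rpow_one] at h
  refine h.trans (le_of_eq ?_)
  have h5 : ((Real.nnabs R : ℝ≥0) : ℝ≥0∞) = ENNReal.ofReal R := by
    rw [ENNReal.ofReal]
    exact ENNReal.coe_inj.mpr (NNReal.coe_injective (by
      simp [Real.coe_nnabs, _root_.abs_of_nonneg hR, Real.coe_toNNReal', max_eq_left hR]))
  rw [h5, ← ENNReal.ofReal_mul hR]

lemma arg_circleMap_aux (R : ℝ) (hR : 0 < R) {θ : ℝ} (hθ : θ ∈ Ioc (-Real.pi) Real.pi) :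
    Complex.arg ((R : ℂ) * Complex.exp (θ * I)) = θ := by
  rw [Complex.arg_real_mul _ hR, Complex.exp_mul_I]
  exact Complex.arg_cos_add_sin_mul_I hθ

lemma arc_ge_small (R : ℝ) (hR : 0 < R) {a b δ : ℝ} (hab : a ≤ b) (hbd : b - a ≤ δ)
    (hδ1 : δ ≤ 1) :
    ENNReal.ofReal (R * (1 - δ ^ 2) * (b - a)) ≤ μH[1] (circleMap 0 R '' Ioc a b) := by
  rcases le_or_gt (1 - δ ^ 2) 0 with h | h
  · rw [ENNReal.ofReal_of_nonpos
      (by nlinarith [mul_nonneg hR.le (sub_nonneg.2 hab)])]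
    exact zero_le
  set c : ℝ := R * (1 - δ ^ 2) with hc
  have hc0 : 0 < c := mul_pos hR h
  set g : ℂ → ℝ := fun w => a + Complex.arg (w * Complex.exp (-(a : ℂ) * I)) with hgdef
  have hπ : (1 : ℝ) < Real.pi := by
    have := Real.pi_gt_three; linarith
  have hδ0 : 0 ≤ δ := by nlinarith
  have hg : ∀ s ∈ Ioc a b, g (circleMap 0 R s) = s := by
    intro s hs
    have h1 : circleMap 0 R s * Complex.exp (-(a : ℂ) * I)
        = (R : ℂ) * Complex.exp ((s - a : ℝ) * I) := by
      rw [circleMap_zero, mul_assoc, ← Complex.exp_add]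
      congr 2
      push_cast
      ring
    have hmem : s - a ∈ Ioc (-Real.pi) Real.pi := by
      constructor
      · have := hs.1; nlinarith [Real.pi_pos]
      · have h2 := hs.2; have h3 := hs.1; linarith
    rw [hgdef]
    simp only
    rw [h1, arg_circleMap_aux R hR hmem]
    ring
  have hlip : LipschitzOnWith (Real.toNNReal c⁻¹) g (circleMap 0 R '' Ioc a b) := by
    rw [lipschitzOnWith_iff_dist_le_mul]
    rintro _ ⟨s, hs, rfl⟩ _ ⟨t, ht, rfl⟩
    rw [hg s hs, hg t ht, dist_circleMap R hR.le, Real.dist_eq]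
    rw [Real.coe_toNNReal _ (by positivity)]
    rw [show c⁻¹ * (2 * R * |Real.sin ((s - t) / 2)|) = (2 * R * |Real.sin ((s - t) / 2)|) / c
      by ring]
    rw [le_div_iff₀ hc0]
    have habs : |s - t| ≤ δ := by
      rw [abs_sub_le_iff]
      constructor <;> nlinarith [hs.1, hs.2, ht.1, ht.2]
    have hsin := sin_lower (abs_nonneg (s - t)) habs hδ1
    have h0 : Real.sin (|s - t| / 2) ≤ |Real.sin ((s - t) / 2)| := by
      rcases le_or_gt 0 (s - t) with hst | hst
      · rw [_root_.abs_of_nonneg hst]; exact le_abs_self _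
      · rw [_root_.abs_of_neg hst, show -(s - t) / 2 = -((s - t) / 2) by ring, Real.sin_neg]
        exact neg_le_abs _
    nlinarith [mul_le_mul_of_nonneg_left hsin hR.le,
      mul_le_mul_of_nonneg_left h0 (by positivity : (0:ℝ) ≤ 2 * R)]
  have himg : g '' (circleMap 0 R '' Ioc a b) = Ioc a b := by
    rw [← image_comp]
    exact (image_congr (fun s hs => hg s hs)).trans (image_id _)
  have h2 := hlip.hausdorffMeasure_image_le zero_le_one
  rw [himg, MeasureTheory.hausdorffMeasure_real, Real.volume_Ioc, ENNReal.rpow_one] at h2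
  have hcoe : ((Real.toNNReal c⁻¹ : ℝ≥0) : ℝ≥0∞) = ENNReal.ofReal c⁻¹ := rfl
  rw [hcoe] at h2
  calc ENNReal.ofReal (c * (b - a)) = ENNReal.ofReal c * ENNReal.ofReal (b - a) := by
        rw [← ENNReal.ofReal_mul hc0.le]
    _ ≤ ENNReal.ofReal c * (ENNReal.ofReal c⁻¹ * μH[1] (circleMap 0 R '' Ioc a b)) :=
        mul_le_mul_right h2 _
    _ = (ENNReal.ofReal c * ENNReal.ofReal c⁻¹) * μH[1] (circleMap 0 R '' Ioc a b) :=
        (mul_assoc _ _ _).symm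
    _ = μH[1] (circleMap 0 R '' Ioc a b) := by
        rw [← ENNReal.ofReal_mul hc0.le, mul_inv_cancel₀ hc0.ne', ENNReal.ofReal_one, one_mul]

lemma partition_Ioc (a δ : ℝ) (hδ : 0 ≤ δ) (n : ℕ) :
    (⋃ k ∈ Finset.range n, Ioc (a + k * δ) (a + (k + 1) * δ)) = Ioc a (a + n * δ) := by
  induction n with
  | zero => simp
  | succ m ih =>
    rw [Finset.range_add_one, Finset.set_biUnion_insert, ih]
    have hm : (0:ℝ) ≤ (m:ℝ) := Nat.cast_nonneg m
    rw [union_comm, Ioc_union_Ioc_eq_Ioc (by nlinarith) (by nlinarith)]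
    congr 1
    push_cast
    ring

lemma arc_eq (R : ℝ) (hR : 0 < R) {a b : ℝ} (hab : a ≤ b) (h2π : b - a ≤ 2 * Real.pi) :
    μH[1] (circleMap 0 R '' Ioc a b) = ENNReal.ofReal (R * (b - a)) := by
  refine le_antisymm (arc_le R hR.le a b) ?_
  rcases eq_or_lt_of_le hab with rfl | hab'
  · simp
  have key : ∀ n : ℕ, (b - a) / (n + 1) ≤ 1 →
      ENNReal.ofReal (R * (1 - ((b - a) / (n + 1)) ^ 2) * (b - a))
        ≤ μH[1] (circleMap 0 R '' Ioc a b) := by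
    intro n hn1
    set δ : ℝ := (b - a) / ((n:ℝ) + 1) with hδdef
    set m : ℕ := n + 1 with hmdef
    have hm : ((m:ℕ):ℝ) = (n:ℝ) + 1 := by rw [hmdef]; push_cast; ring
    have hm0 : (0:ℝ) < m := by rw [hm]; positivity
    have hδ0 : 0 < δ := div_pos (by linarith) (by positivity)
    have hmd : (m:ℝ) * δ = b - a := by
      rw [hm, hδdef]; field_simp
    have hδ1 : δ ≤ 1 := hn1
    set f : ℕ → Set ℂ := fun k => circleMap 0 R '' Ioc (a + k * δ) (a + (k + 1) * δ) with hfdef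
    have hsub : ∀ k, k ∈ Finset.range m → Ioc (a + k * δ) (a + (k + 1) * δ) ⊆ Ioc a b := by
      intro k hk
      have hk' : (k:ℝ) + 1 ≤ m := by exact_mod_cast Nat.succ_le_of_lt (Finset.mem_range.1 hk)
      apply Ioc_subset_Ioc
      · nlinarith [(Nat.cast_nonneg k : (0:ℝ) ≤ (k:ℝ))]
      · nlinarith
    have hinj := injOn_circleMap R hR.ne' h2π
    have hdisj : (↑(Finset.range m) : Set ℕ).PairwiseDisjoint f := by
      intro k hk l hl hkl
      rw [Function.onFun, Set.disjoint_left]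
      rintro _ ⟨s1, hs1, rfl⟩ ⟨s2, hs2, heq⟩
      have hseq : s2 = s1 :=
        hinj (hsub l (Finset.mem_coe.1 hl) hs2) (hsub k (Finset.mem_coe.1 hk) hs1) heq
      rw [hseq] at hs2
      rcases lt_or_gt_of_ne hkl with h | h
      · have hcast : (k:ℝ) + 1 ≤ l := by exact_mod_cast h
        nlinarith [hs1.2, hs2.1]
      · have hcast : (l:ℝ) + 1 ≤ k := by exact_mod_cast h
        nlinarith [hs1.1, hs2.2]
    have hmble : ∀ k ∈ Finset.range m, MeasurableSet (f k) := fun k _ =>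
      arc_measurableSet R _ _
    have hpart := partition_Ioc a δ hδ0.le m
    rw [show a + (m:ℝ) * δ = b by rw [hmd]; ring] at hpart
    have hstep : ∀ k ∈ Finset.range m,
        ENNReal.ofReal (R * (1 - δ ^ 2) * δ) ≤ μH[1] (f k) := by
      intro k _
      have h := arc_ge_small R hR (a := a + k * δ) (b := a + (k + 1) * δ)
        (by nlinarith) (by nlinarith) hδ1
      convert h using 2
      ring
    calc ENNReal.ofReal (R * (1 - δ ^ 2) * (b - a))
        = (m : ℝ≥0∞) * ENNReal.ofReal (R * (1 - δ ^ 2) * δ) := by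
          rw [← ENNReal.ofReal_natCast, ← ENNReal.ofReal_mul (by positivity : (0:ℝ) ≤ (m:ℝ))]
          congr 1
          rw [← hmd]; ring
      _ = ∑ k ∈ Finset.range m, ENNReal.ofReal (R * (1 - δ ^ 2) * δ) := by
          rw [Finset.sum_const, Finset.card_range, nsmul_eq_mul]
      _ ≤ ∑ k ∈ Finset.range m, μH[1] (f k) := Finset.sum_le_sum hstep
      _ = μH[1] (⋃ k ∈ Finset.range m, f k) := (measure_biUnion_finset hdisj hmble).symm
      _ = μH[1] (circleMap 0 R '' Ioc a b) := by
          rw [hfdef, ← image_iUnion₂, hpart]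
  have hlim : Filter.Tendsto (fun n : ℕ => ENNReal.ofReal (R * (1 - ((b - a) / (n + 1)) ^ 2) * (b - a)))
      Filter.atTop (nhds (ENNReal.ofReal (R * (b - a)))) := by
    have h0 : Filter.Tendsto (fun n : ℕ => (b - a) / ((n : ℝ) + 1)) Filter.atTop (nhds 0) := by
      have := tendsto_one_div_add_atTop_nhds_zero_nat.const_mul (b - a)
      simpa [mul_one_div, div_eq_mul_inv] using this
    have hcont : Continuous fun d : ℝ => ENNReal.ofReal (R * (1 - d ^ 2) * (b - a)) := by
      apply ENNReal.continuous_ofReal.comp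
      continuity
    have := (hcont.tendsto 0).comp h0
    simpa [Function.comp_def] using this
  refine le_of_tendsto hlim ?_
  have hev : ∀ᶠ n : ℕ in Filter.atTop, (b - a) / ((n : ℝ) + 1) ≤ 1 := by
    filter_upwards [Filter.eventually_ge_atTop ⌈b - a⌉₊] with n hn
    have h1 : (b - a : ℝ) ≤ n := le_trans (Nat.le_ceil _) (by exact_mod_cast hn)
    rw [div_le_one (by positivity)]
    linarith
  filter_upwards [hev] with n hn using key n hn

lemma sphere_eq_image (R : ℝ) (hR : 0 < R) :
    circleMap 0 R '' Ioc (-Real.pi) Real.pi = Metric.sphere (0:ℂ) R := by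
  have h := (periodic_circleMap 0 R).image_Ioc Real.two_pi_pos (-Real.pi)
  rw [show -Real.pi + 2 * Real.pi = Real.pi by ring] at h
  rw [h, range_circleMap, _root_.abs_of_pos hR]

lemma sphere_hausdorff_ne_top (R : ℝ) (hR : 0 < R) :
    μH[1] (Metric.sphere (0:ℂ) R) ≠ ⊤ := by
  rw [← sphere_eq_image R hR]
  exact ne_top_of_le_ne_top ENNReal.ofReal_ne_top (arc_le R hR.le _ _)

lemma arg_circleMap (R : ℝ) (hR : 0 < R) {θ : ℝ} (hθ : θ ∈ Ioc (-Real.pi) Real.pi) :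
    Complex.arg (circleMap 0 R θ) = θ := by
  rw [circleMap_zero]
  exact arg_circleMap_aux R hR hθ

lemma circleMap_arg (R : ℝ) (hR : 0 < R) {w : ℂ} (hw : w ∈ Metric.sphere (0:ℂ) R) :
    circleMap 0 R (Complex.arg w) = w := by
  have habs : ‖w‖ = R := by
    simpa [Complex.dist_eq] using hw
  rw [circleMap_zero, ← habs]
  exact Complex.norm_mul_exp_arg_mul_I w

lemma sphere_restrict_eq (R : ℝ) (hR : 0 < R) :
    (μH[1] : Measure ℂ).restrict (Metric.sphere (0:ℂ) R)
      = Measure.map (circleMap 0 R)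
          ((ENNReal.ofReal R) • (volume : Measure ℝ).restrict (Ioc (-Real.pi) Real.pi)) := by
  have hρ : Measure.map Complex.arg ((μH[1] : Measure ℂ).restrict (Metric.sphere (0:ℂ) R))
      = (ENNReal.ofReal R) • (volume : Measure ℝ).restrict (Ioc (-Real.pi) Real.pi) := by
    refine Measure.ext_of_Ioc' _ _ (fun p q _ => ?_) (fun p q _ => ?_)
    · rw [Measure.map_apply Complex.measurable_arg measurableSet_Ioc]
      rw [Measure.restrict_apply (Complex.measurable_arg measurableSet_Ioc)]
      exact ne_top_of_le_ne_top (sphere_hausdorff_ne_top R hR)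
        (measure_mono inter_subset_right)
    · rw [Measure.map_apply Complex.measurable_arg measurableSet_Ioc,
        Measure.restrict_apply (Complex.measurable_arg measurableSet_Ioc)]
      have hset : Complex.arg ⁻¹' Ioc p q ∩ Metric.sphere (0:ℂ) R
          = circleMap 0 R '' Ioc (p ⊔ -Real.pi) (q ⊓ Real.pi) := by
        rw [← Ioc_inter_Ioc]
        ext w
        constructor
        · rintro ⟨hw1, hw2⟩
          exact ⟨Complex.arg w, ⟨hw1, Complex.arg_mem_Ioc w⟩, circleMap_arg R hR hw2⟩
        · rintro ⟨θ, hθ, rfl⟩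
          exact ⟨by simpa [mem_preimage, arg_circleMap R hR hθ.2] using hθ.1,
            circleMap_mem_sphere 0 hR.le θ⟩
      rw [hset]
      rw [Measure.smul_apply, Measure.restrict_apply measurableSet_Ioc, Ioc_inter_Ioc,
        Real.volume_Ioc, smul_eq_mul]
      rcases le_or_gt (p ⊔ -Real.pi) (q ⊓ Real.pi) with hle | hlt
      · rw [arc_eq R hR hle (by
          have h1 : q ⊓ Real.pi ≤ Real.pi := inf_le_right
          have h2 : -Real.pi ≤ p ⊔ -Real.pi := le_sup_right
          linarith)]
        rw [← ENNReal.ofReal_mul hR.le]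
      · rw [Ioc_eq_empty (by exact fun hcon => absurd (le_of_lt hcon) (not_le.2 hlt)), image_empty, measure_empty,
          ENNReal.ofReal_of_nonpos
            (show q ⊓ Real.pi - (p ⊔ -Real.pi) ≤ 0 by linarith), mul_zero]
  have hcomp : Measure.map (circleMap 0 R)
      (Measure.map Complex.arg ((μH[1] : Measure ℂ).restrict (Metric.sphere (0:ℂ) R)))
      = (μH[1] : Measure ℂ).restrict (Metric.sphere (0:ℂ) R) := by
    rw [Measure.map_map (measurable_circleMap 0 R) Complex.measurable_arg]
    have hae : (circleMap 0 R ∘ Complex.arg)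
        =ᶠ[ae ((μH[1] : Measure ℂ).restrict (Metric.sphere (0:ℂ) R))] id := by
      filter_upwards [ae_restrict_mem Metric.isClosed_sphere.measurableSet] with w hw
      exact circleMap_arg R hR hw
    rw [Measure.map_congr hae, Measure.map_id]
  rw [← hcomp, hρ]

lemma integral_sphere_eq (R : ℝ) (hR : 0 < R) (f : ℂ → ℝ) (hmf : Measurable f) :
    (∫ w in Metric.sphere (0:ℂ) R, f w ∂μH[1])
      = R * ∫ θ in (-Real.pi)..Real.pi, f (circleMap 0 R θ) := by
  rw [sphere_restrict_eq R hR,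
    MeasureTheory.integral_map (measurable_circleMap 0 R).aemeasurable
      hmf.aestronglyMeasurable, integral_smul_measure, ENNReal.toReal_ofReal hR.le,
    intervalIntegral.integral_of_le (by linarith [Real.pi_pos]), smul_eq_mul]


lemma integral_exp_I_zero :
    ∫ θ in (-Real.pi)..Real.pi, Complex.exp (I * θ) = 0 := by
  rw [integral_exp_mul_complex I_ne_zero]
  have h1 : Complex.exp (I * (Real.pi : ℂ)) = -1 := by
    rw [mul_comm, Complex.exp_pi_mul_I]
  have h2 : Complex.exp (I * ((-Real.pi : ℝ) : ℂ)) = -1 := by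
    push_cast
    rw [show I * (-(Real.pi : ℂ)) = -((Real.pi : ℂ) * I) by ring, Complex.exp_neg,
      Complex.exp_pi_mul_I]
    norm_num
  rw [h1, h2]
  simp

lemma integral_exp_neg_I_zero :
    ∫ θ in (-Real.pi)..Real.pi, Complex.exp (-I * θ) = 0 := by
  rw [integral_exp_mul_complex (neg_ne_zero.2 I_ne_zero)]
  have h1 : Complex.exp (-I * (Real.pi : ℂ)) = -1 := by
    rw [show -I * (Real.pi : ℂ) = -((Real.pi : ℂ) * I) by ring, Complex.exp_neg,
      Complex.exp_pi_mul_I]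
    norm_num
  have h2 : Complex.exp (-I * ((-Real.pi : ℝ) : ℂ)) = -1 := by
    push_cast
    rw [show -I * (-(Real.pi : ℂ)) = (Real.pi : ℂ) * I by ring, Complex.exp_pi_mul_I]
  rw [h1, h2]
  simp

lemma integral_exp_neg_two_I_zero :
    ∫ θ in (-Real.pi)..Real.pi, Complex.exp (-2 * I * θ) = 0 := by
  rw [integral_exp_mul_complex (by simp [I_ne_zero] : (-2 : ℂ) * I ≠ 0)]
  have h1 : Complex.exp (-2 * I * (Real.pi : ℂ)) = 1 := by
    rw [show (-2 : ℂ) * I * (Real.pi : ℂ) = (-2 : ℤ) * (2 * Real.pi * I) / 2 by push_cast; ring]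
    rw [show ((-2 : ℤ) : ℂ) * (2 * (Real.pi:ℂ) * I) / 2 = ((-1 : ℤ)) * (2 * Real.pi * I) by push_cast; ring]
    exact Complex.exp_int_mul_two_pi_mul_I (-1)
  have h2 : Complex.exp (-2 * I * ((-Real.pi : ℝ) : ℂ)) = 1 := by
    push_cast
    rw [show (-2 : ℂ) * I * (-(Real.pi:ℂ)) = ((1 : ℤ)) * (2 * Real.pi * I) by push_cast; ring]
    exact Complex.exp_int_mul_two_pi_mul_I 1
  rw [h1, h2]
  simp

lemma integral_circleMap_zero (R : ℝ) :
    ∫ θ in (-Real.pi)..Real.pi, circleMap 0 R θ = 0 := by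
  have h : EqOn (fun θ : ℝ => circleMap 0 R θ)
      (fun θ : ℝ => (R : ℂ) * Complex.exp (I * θ)) (Set.uIcc (-Real.pi) Real.pi) := by
    intro θ _
    simp only [circleMap_zero]
    congr 1
    ring
  rw [intervalIntegral.integral_congr h, intervalIntegral.integral_const_mul,
    integral_exp_I_zero, mul_zero]

lemma integral_circleMap_inv_zero (R : ℝ) (hR : 0 < R) :
    ∫ θ in (-Real.pi)..Real.pi, (circleMap 0 R θ)⁻¹ = 0 := by
  have h : EqOn (fun θ : ℝ => (circleMap 0 R θ)⁻¹)
      (fun θ : ℝ => (R : ℂ)⁻¹ * Complex.exp (-I * θ)) (Set.uIcc (-Real.pi) Real.pi) := by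
    intro θ _
    simp only [circleMap_zero, mul_inv]
    rw [← Complex.exp_neg]
    congr 1
    ring
  rw [intervalIntegral.integral_congr h, intervalIntegral.integral_const_mul,
    integral_exp_neg_I_zero, mul_zero]

lemma integral_circleMap_inv_sq_zero (R : ℝ) (hR : 0 < R) :
    ∫ θ in (-Real.pi)..Real.pi, ((circleMap 0 R θ)⁻¹ * (circleMap 0 R θ)⁻¹) = 0 := by
  have h : EqOn (fun θ : ℝ => (circleMap 0 R θ)⁻¹ * (circleMap 0 R θ)⁻¹)
      (fun θ : ℝ => ((R : ℂ)^2)⁻¹ * Complex.exp (-2 * I * θ)) (Set.uIcc (-Real.pi) Real.pi) := by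
    intro θ _
    simp only [circleMap_zero, mul_inv, ← Complex.exp_neg]
    rw [show (-2 : ℂ) * I * (θ:ℂ) = (-((θ:ℂ) * I)) + (-((θ:ℂ) * I)) by ring, Complex.exp_add]
    ring
  rw [intervalIntegral.integral_congr h, intervalIntegral.integral_const_mul,
    integral_exp_neg_two_I_zero, mul_zero]

lemma int_W (R : ℝ) (hR : 0 < R) (z : ℂ) (hz : ‖z‖ < R) :
    ∫ θ in (-Real.pi)..Real.pi, (circleMap 0 R θ * I) * (circleMap 0 R θ - z)⁻¹
      = 2 * Real.pi * I := by
  have hzb : z ∈ Metric.ball (0:ℂ) R := by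
    simpa [Metric.mem_ball, Complex.dist_eq] using hz
  have hper : Function.Periodic
      (fun θ => (circleMap 0 R θ * I) * (circleMap 0 R θ - z)⁻¹) (2 * Real.pi) := by
    intro θ
    simp [periodic_circleMap 0 R θ]
  have h1 := hper.intervalIntegral_add_eq (-Real.pi) 0
  rw [show -Real.pi + 2 * Real.pi = Real.pi by ring, zero_add] at h1
  rw [h1]
  have h2 : (∮ w in C(0, R), (w - z)⁻¹)
      = ∫ θ in (0:ℝ)..2 * Real.pi, (circleMap 0 R θ * I) * (circleMap 0 R θ - z)⁻¹ := by
    simp only [circleIntegral, deriv_circleMap, smul_eq_mul]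
  rw [← h2, circleIntegral.integral_sub_inv_of_mem_ball hzb]

lemma int_J1 (R : ℝ) (hR : 0 < R) (z : ℂ) (hz : ‖z‖ < R) :
    ∫ θ in (-Real.pi)..Real.pi, circleMap 0 R θ * (circleMap 0 R θ - z)⁻¹
      = 2 * Real.pi := by
  have hzb : z ∈ Metric.ball (0:ℂ) R := by
    simpa [Metric.mem_ball, Complex.dist_eq] using hz
  have h1 := int_W R hR z hz
  have h2 : EqOn (fun θ : ℝ => (circleMap 0 R θ * I) * (circleMap 0 R θ - z)⁻¹)
      (fun θ : ℝ => I * (circleMap 0 R θ * (circleMap 0 R θ - z)⁻¹))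
      (Set.uIcc (-Real.pi) Real.pi) := fun θ _ => by ring
  rw [intervalIntegral.integral_congr h2, intervalIntegral.integral_const_mul] at h1
  have h3 : (2 : ℂ) * Real.pi * I = I * (2 * Real.pi) := by ring
  rw [h3] at h1
  exact mul_left_cancel₀ I_ne_zero h1

lemma int_J2 (R : ℝ) (hR : 0 < R) (z : ℂ) (hz : ‖z‖ < R) :
    ∫ θ in (-Real.pi)..Real.pi, (circleMap 0 R θ - z)⁻¹ = 0 := by
  have hzb : z ∈ Metric.ball (0:ℂ) R := by
    simpa [Metric.mem_ball, Complex.dist_eq] using hz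
  by_cases hz0 : z = 0
  · subst hz0
    simp only [sub_zero]
    exact integral_circleMap_inv_zero R hR
  · have hne : ∀ θ : ℝ, circleMap 0 R θ ≠ 0 := fun θ => circleMap_ne_center hR.ne'
    have hnez : ∀ θ : ℝ, circleMap 0 R θ - z ≠ 0 :=
      fun θ => sub_ne_zero.2 (circleMap_ne_mem_ball hzb θ)
    have hpt : EqOn (fun θ : ℝ => (circleMap 0 R θ - z)⁻¹)
        (fun θ : ℝ => z⁻¹ * (circleMap 0 R θ * (circleMap 0 R θ - z)⁻¹) - z⁻¹ * 1)
        (Set.uIcc (-Real.pi) Real.pi) := by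
      intro θ _
      simp only
      have hv := mul_inv_cancel₀ (hnez θ)
      have hz1 := inv_mul_cancel₀ hz0
      linear_combination (-z⁻¹) * hv + (-(circleMap 0 R θ - z)⁻¹) * hz1
    have hcJ : Continuous fun θ : ℝ => circleMap 0 R θ * (circleMap 0 R θ - z)⁻¹ :=
      (continuous_circleMap 0 R).mul (continuous_circleMap_inv hzb)
    rw [intervalIntegral.integral_congr hpt,
      intervalIntegral.integral_sub ((hcJ.intervalIntegrable _ _).const_mul _)
        (intervalIntegrable_const),
      intervalIntegral.integral_const_mul, int_J1 R hR z hz]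
    simp only [intervalIntegral.integral_const, mul_one]
    rw [Complex.real_smul]
    push_cast
    ring

lemma int_J3 (R : ℝ) (hR : 0 < R) (z : ℂ) (hz : ‖z‖ < R) :
    ∫ θ in (-Real.pi)..Real.pi, (circleMap 0 R θ)⁻¹ * (circleMap 0 R θ - z)⁻¹ = 0 := by
  have hzb : z ∈ Metric.ball (0:ℂ) R := by
    simpa [Metric.mem_ball, Complex.dist_eq] using hz
  by_cases hz0 : z = 0
  · subst hz0
    simp only [sub_zero]
    exact integral_circleMap_inv_sq_zero R hR
  · have hne : ∀ θ : ℝ, circleMap 0 R θ ≠ 0 := fun θ => circleMap_ne_center hR.ne'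
    have hnez : ∀ θ : ℝ, circleMap 0 R θ - z ≠ 0 :=
      fun θ => sub_ne_zero.2 (circleMap_ne_mem_ball hzb θ)
    have hpt : EqOn (fun θ : ℝ => (circleMap 0 R θ)⁻¹ * (circleMap 0 R θ - z)⁻¹)
        (fun θ : ℝ => z⁻¹ * (circleMap 0 R θ - z)⁻¹ - z⁻¹ * (circleMap 0 R θ)⁻¹)
        (Set.uIcc (-Real.pi) Real.pi) := by
      intro θ _
      simp only
      have hv := mul_inv_cancel₀ (hnez θ)
      have hz1 := inv_mul_cancel₀ hz0
      have hg1 := inv_mul_cancel₀ (hne θ)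
      linear_combination (-(z⁻¹ * (circleMap 0 R θ)⁻¹)) * hv
        + (z⁻¹ * (circleMap 0 R θ - z)⁻¹) * hg1
        + (-((circleMap 0 R θ)⁻¹ * (circleMap 0 R θ - z)⁻¹)) * hz1
    have hcv : Continuous fun θ : ℝ => (circleMap 0 R θ - z)⁻¹ := continuous_circleMap_inv hzb
    have hci : Continuous fun θ : ℝ => (circleMap 0 R θ)⁻¹ :=
      (continuous_circleMap 0 R).inv₀ hne
    rw [intervalIntegral.integral_congr hpt,
      intervalIntegral.integral_sub ((hcv.intervalIntegrable _ _).const_mul _)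
        ((hci.intervalIntegrable _ _).const_mul _),
      intervalIntegral.integral_const_mul, intervalIntegral.integral_const_mul,
      int_J2 R hR z hz, integral_circleMap_inv_zero R hR]
    simp


lemma hasDerivAt_circleMap_inv (R : ℝ) (hR : 0 < R) (θ : ℝ) :
    HasDerivAt (fun t : ℝ => (circleMap 0 R t)⁻¹) (-((circleMap 0 R θ)⁻¹ * I)) θ := by
  have heq : ∀ t : ℝ, circleMap 0 R⁻¹ (-t) = (circleMap 0 R t)⁻¹ := by
    intro t
    simp only [circleMap_zero, mul_inv, ← Complex.exp_neg, Complex.ofReal_inv,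
      Complex.ofReal_neg, neg_mul]
  have h0 : HasDerivAt (fun t : ℝ => -t) (-1 : ℝ) θ := by
    exact hasDerivAt_neg θ
  have hcomp := (hasDerivAt_circleMap 0 R⁻¹ (-θ)).scomp (𝕜 := ℝ) θ h0
  have hfun : (circleMap 0 R⁻¹ ∘ fun t : ℝ => -t) = fun t : ℝ => (circleMap 0 R t)⁻¹ := by
    funext t; exact heq t
  rw [hfun] at hcomp
  refine hcomp.congr_deriv (Eq.symm ?_)
  rw [heq θ, Complex.real_smul]
  push_cast
  ring

lemma u_abs_lt (R : ℝ) (hR : 0 < R) (z : ℂ) (hz : ‖z‖ < R) (θ : ℝ) :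
    ‖z * (circleMap 0 R θ)⁻¹‖ < 1 := by
  rw [norm_mul, norm_inv, norm_circleMap_zero, _root_.abs_of_pos hR]
  rw [show (1:ℝ) = R * R⁻¹ by rw [mul_inv_cancel₀ hR.ne']]
  exact mul_lt_mul_of_pos_right hz (inv_pos.2 hR)

lemma u_slit (R : ℝ) (hR : 0 < R) (z : ℂ) (hz : ‖z‖ < R) (θ : ℝ) :
    1 - z * (circleMap 0 R θ)⁻¹ ∈ Complex.slitPlane := by
  rw [Complex.mem_slitPlane_iff]
  left
  have h1 := u_abs_lt R hR z hz θ
  have h2 := Complex.re_le_norm (z * (circleMap 0 R θ)⁻¹)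
  simp only [Complex.sub_re, Complex.one_re]
  linarith

lemma u_ne (R : ℝ) (hR : 0 < R) (z : ℂ) (hz : ‖z‖ < R) (θ : ℝ) :
    1 - z * (circleMap 0 R θ)⁻¹ ≠ 0 := by
  intro h
  rw [sub_eq_zero] at h
  have h1 := u_abs_lt R hR z hz θ
  rw [← h] at h1
  simp at h1

lemma u_cont (R : ℝ) (hR : 0 < R) (z : ℂ) :
    Continuous fun θ : ℝ => 1 - z * (circleMap 0 R θ)⁻¹ :=
  continuous_const.sub (continuous_const.mul
    ((continuous_circleMap 0 R).inv₀ fun θ => circleMap_ne_center hR.ne'))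

lemma logu_cont (R : ℝ) (hR : 0 < R) (z : ℂ) (hz : ‖z‖ < R) :
    Continuous fun θ : ℝ => Complex.log (1 - z * (circleMap 0 R θ)⁻¹) :=
  continuous_iff_continuousAt.2 fun θ =>
    (u_cont R hR z).continuousAt.clog (u_slit R hR z hz θ)

lemma int_log_mul (R : ℝ) (hR : 0 < R) (z : ℂ) (hz : ‖z‖ < R) :
    ∫ θ in (-Real.pi)..Real.pi,
      circleMap 0 R θ * Complex.log (1 - z * (circleMap 0 R θ)⁻¹)
      = -2 * Real.pi * z := by
  have hne : ∀ θ : ℝ, circleMap 0 R θ ≠ 0 := fun θ => circleMap_ne_center hR.ne'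
  have hzb : z ∈ Metric.ball (0:ℂ) R := by
    simpa [Metric.mem_ball, Complex.dist_eq] using hz
  have hnez : ∀ θ : ℝ, circleMap 0 R θ - z ≠ 0 :=
    fun θ => sub_ne_zero.2 (circleMap_ne_mem_ball hzb θ)
  have hF : ∀ θ : ℝ, HasDerivAt
      (fun t => circleMap 0 R t * Complex.log (1 - z * (circleMap 0 R t)⁻¹))
      (I * (circleMap 0 R θ * Complex.log (1 - z * (circleMap 0 R θ)⁻¹)
          + z * (circleMap 0 R θ * (circleMap 0 R θ - z)⁻¹))) θ := by
    intro θ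
    have h1 := hasDerivAt_circleMap_inv R hR θ
    have h2 := (h1.const_mul z).const_sub 1
    have h3 := h2.clog_real (u_slit R hR z hz θ)
    have h4 := (hasDerivAt_circleMap 0 R θ).mul h3
    have hu_eq : (1 : ℂ) - z * (circleMap 0 R θ)⁻¹
        = (circleMap 0 R θ - z) * (circleMap 0 R θ)⁻¹ := by
      rw [sub_mul, mul_inv_cancel₀ (hne θ)]
    refine h4.congr_deriv (Eq.symm ?_)
    rw [hu_eq, div_eq_mul_inv, mul_inv, inv_inv]
    have hgg := mul_inv_cancel₀ (hne θ)
    linear_combination (-(I * z * circleMap 0 R θ * (circleMap 0 R θ - z)⁻¹)) * hgg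
  have hper : circleMap 0 R Real.pi = circleMap 0 R (-Real.pi) := by
    have h := periodic_circleMap 0 R (-Real.pi)
    rw [show -Real.pi + 2 * Real.pi = Real.pi by ring] at h
    exact h
  have hγc := continuous_circleMap 0 R
  have hlogc := logu_cont R hR z hz
  have hvc := continuous_circleMap_inv hzb
  have hD_cont : Continuous fun θ : ℝ =>
      I * (circleMap 0 R θ * Complex.log (1 - z * (circleMap 0 R θ)⁻¹)
          + z * (circleMap 0 R θ * (circleMap 0 R θ - z)⁻¹)) :=
    continuous_const.mul ((hγc.mul hlogc).add (continuous_const.mul (hγc.mul hvc)))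
  have hFTC := intervalIntegral.integral_eq_sub_of_hasDerivAt
    (a := -Real.pi) (b := Real.pi) (fun θ _ => hF θ)
    (hD_cont.intervalIntegrable _ _)
  rw [hper, sub_self] at hFTC
  rw [intervalIntegral.integral_const_mul] at hFTC
  have h5 := (mul_eq_zero.1 hFTC).resolve_left I_ne_zero
  rw [intervalIntegral.integral_add ((hγc.fun_mul hlogc).intervalIntegrable _ _)
      (((hγc.fun_mul hvc).intervalIntegrable _ _).const_mul _),
    intervalIntegral.integral_const_mul, int_J1 R hR z hz] at h5
  linear_combination h5

lemma int_log_div (R : ℝ) (hR : 0 < R) (z : ℂ) (hz : ‖z‖ < R) :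
    ∫ θ in (-Real.pi)..Real.pi,
      Complex.log (1 - z * (circleMap 0 R θ)⁻¹) * (circleMap 0 R θ)⁻¹ = 0 := by
  have hne : ∀ θ : ℝ, circleMap 0 R θ ≠ 0 := fun θ => circleMap_ne_center hR.ne'
  have hzb : z ∈ Metric.ball (0:ℂ) R := by
    simpa [Metric.mem_ball, Complex.dist_eq] using hz
  have hnez : ∀ θ : ℝ, circleMap 0 R θ - z ≠ 0 :=
    fun θ => sub_ne_zero.2 (circleMap_ne_mem_ball hzb θ)
  have hG : ∀ θ : ℝ, HasDerivAt
      (fun t => Complex.log (1 - z * (circleMap 0 R t)⁻¹) * (circleMap 0 R t)⁻¹)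
      (I * (z * ((circleMap 0 R θ)⁻¹ * (circleMap 0 R θ - z)⁻¹)
          - Complex.log (1 - z * (circleMap 0 R θ)⁻¹) * (circleMap 0 R θ)⁻¹)) θ := by
    intro θ
    have h1 := hasDerivAt_circleMap_inv R hR θ
    have h2 := (h1.const_mul z).const_sub 1
    have h3 := h2.clog_real (u_slit R hR z hz θ)
    have h4 := h3.mul h1
    have hu_eq : (1 : ℂ) - z * (circleMap 0 R θ)⁻¹
        = (circleMap 0 R θ - z) * (circleMap 0 R θ)⁻¹ := by
      rw [sub_mul, mul_inv_cancel₀ (hne θ)]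
    refine h4.congr_deriv (Eq.symm ?_)
    rw [hu_eq, div_eq_mul_inv, mul_inv, inv_inv]
    have hgg := mul_inv_cancel₀ (hne θ)
    linear_combination (-(I * z * (circleMap 0 R θ)⁻¹ * (circleMap 0 R θ - z)⁻¹)) * hgg
  have hper : circleMap 0 R Real.pi = circleMap 0 R (-Real.pi) := by
    have h := periodic_circleMap 0 R (-Real.pi)
    rw [show -Real.pi + 2 * Real.pi = Real.pi by ring] at h
    exact h
  have hγc := continuous_circleMap 0 R
  have hlogc := logu_cont R hR z hz
  have hvc := continuous_circleMap_inv hzb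
  have hic : Continuous fun θ : ℝ => (circleMap 0 R θ)⁻¹ := hγc.inv₀ hne
  have hE_cont : Continuous fun θ : ℝ =>
      I * (z * ((circleMap 0 R θ)⁻¹ * (circleMap 0 R θ - z)⁻¹)
          - Complex.log (1 - z * (circleMap 0 R θ)⁻¹) * (circleMap 0 R θ)⁻¹) :=
    continuous_const.mul ((continuous_const.mul (hic.mul hvc)).sub (hlogc.mul hic))
  have hFTC := intervalIntegral.integral_eq_sub_of_hasDerivAt
    (a := -Real.pi) (b := Real.pi) (fun θ _ => hG θ)
    (hE_cont.intervalIntegrable _ _)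
  rw [hper, sub_self] at hFTC
  rw [intervalIntegral.integral_const_mul] at hFTC
  have h5 := (mul_eq_zero.1 hFTC).resolve_left I_ne_zero
  rw [intervalIntegral.integral_sub (((hic.fun_mul hvc).intervalIntegrable _ _).const_mul _)
      ((hlogc.fun_mul hic).intervalIntegrable _ _),
    intervalIntegral.integral_const_mul, int_J3 R hR z hz] at h5
  linear_combination -h5


lemma conj_circleMap (R : ℝ) (hR : 0 < R) (θ : ℝ) :
    (starRingEnd ℂ) (circleMap 0 R θ) = (R:ℂ)^2 * (circleMap 0 R θ)⁻¹ := by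
  have hne : circleMap 0 R θ ≠ 0 := circleMap_ne_center hR.ne'
  have h1 := Complex.mul_conj (circleMap 0 R θ)
  rw [Complex.normSq_eq_norm_sq, norm_circleMap_zero, _root_.abs_of_pos hR] at h1
  rw [eq_comm, mul_inv_eq_iff_eq_mul₀ hne, mul_comm]
  push_cast at h1
  exact h1.symm

lemma key (R : ℝ) (hR : 0 < R) (z : ℂ) (hz : ‖z‖ < R) :
    ∫ θ in (-Real.pi)..Real.pi,
        ((Real.log (‖z - circleMap 0 R θ‖) : ℝ) : ℂ) * circleMap 0 R θ
      = -(Real.pi : ℂ) * z := by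
  have hne : ∀ θ : ℝ, circleMap 0 R θ ≠ 0 := fun θ => circleMap_ne_center hR.ne'
  have hpt : EqOn
      (fun θ : ℝ => ((Real.log (‖z - circleMap 0 R θ‖) : ℝ) : ℂ) * circleMap 0 R θ)
      (fun θ : ℝ => ((Real.log R : ℝ) : ℂ) * circleMap 0 R θ
        + (2⁻¹ : ℂ) * (circleMap 0 R θ * Complex.log (1 - z * (circleMap 0 R θ)⁻¹))
        + (2⁻¹ : ℂ) * ((starRingEnd ℂ) (Complex.log (1 - z * (circleMap 0 R θ)⁻¹)
            * ((R:ℂ)^2 * (circleMap 0 R θ)⁻¹))))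
      (Set.uIcc (-Real.pi) Real.pi) := by
    intro θ _
    simp only
    have h2 : z - circleMap 0 R θ
        = -(circleMap 0 R θ * (1 - z * (circleMap 0 R θ)⁻¹)) := by
      rw [mul_sub, mul_one,
        show circleMap 0 R θ * (z * (circleMap 0 R θ)⁻¹)
          = z * (circleMap 0 R θ * (circleMap 0 R θ)⁻¹) by ring,
        mul_inv_cancel₀ (hne θ), mul_one]
      ring
    have h1 : ‖z - circleMap 0 R θ‖
        = R * ‖1 - z * (circleMap 0 R θ)⁻¹‖ := by
      rw [h2, norm_neg, norm_mul, norm_circleMap_zero, _root_.abs_of_pos hR]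
    rw [h1, Real.log_mul hR.ne' (norm_ne_zero_iff.2 (u_ne R hR z hz θ)),
      ← Complex.log_re, Complex.ofReal_add]
    have h3 : (((Complex.log (1 - z * (circleMap 0 R θ)⁻¹)).re : ℝ) : ℂ)
        = (Complex.log (1 - z * (circleMap 0 R θ)⁻¹)
          + (starRingEnd ℂ) (Complex.log (1 - z * (circleMap 0 R θ)⁻¹))) / 2 := by
      rw [Complex.add_conj]
      push_cast
      ring
    have h4 : (starRingEnd ℂ) ((R:ℂ)^2 * (circleMap 0 R θ)⁻¹) = circleMap 0 R θ := by
      rw [← conj_circleMap R hR θ, Complex.conj_conj]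
    rw [h3, map_mul, h4]
    ring
  rw [intervalIntegral.integral_congr hpt]
  have hγc := continuous_circleMap 0 R
  have hlogc := logu_cont R hR z hz
  have hic : Continuous fun θ : ℝ => (circleMap 0 R θ)⁻¹ := hγc.inv₀ hne
  have hconjc : Continuous fun θ : ℝ => (starRingEnd ℂ)
      (Complex.log (1 - z * (circleMap 0 R θ)⁻¹) * ((R:ℂ)^2 * (circleMap 0 R θ)⁻¹)) :=
    Complex.continuous_conj.comp (hlogc.mul (continuous_const.mul hic))
  rw [intervalIntegral.integral_add
      (((continuous_const.fun_mul hγc).fun_add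
        (continuous_const.fun_mul (hγc.fun_mul hlogc))).intervalIntegrable _ _)
      ((continuous_const.fun_mul hconjc).intervalIntegrable _ _),
    intervalIntegral.integral_add ((continuous_const.fun_mul hγc).intervalIntegrable _ _)
      ((continuous_const.fun_mul (hγc.fun_mul hlogc)).intervalIntegrable _ _),
    intervalIntegral.integral_const_mul, intervalIntegral.integral_const_mul,
    intervalIntegral.integral_const_mul,
    integral_circleMap_zero R, int_log_mul R hR z hz]
  have hle : (-Real.pi) ≤ Real.pi := by linarith [Real.pi_pos]
  have hc0 : (∫ θ in (-Real.pi)..Real.pi, (starRingEnd ℂ)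
      (Complex.log (1 - z * (circleMap 0 R θ)⁻¹) * ((R:ℂ)^2 * (circleMap 0 R θ)⁻¹)))
      = 0 := by
    have heq : (∫ θ in (-Real.pi)..Real.pi, (starRingEnd ℂ)
        (Complex.log (1 - z * (circleMap 0 R θ)⁻¹) * ((R:ℂ)^2 * (circleMap 0 R θ)⁻¹)))
        = (starRingEnd ℂ) (∫ θ in (-Real.pi)..Real.pi,
            Complex.log (1 - z * (circleMap 0 R θ)⁻¹) * ((R:ℂ)^2 * (circleMap 0 R θ)⁻¹)) := by
      rw [intervalIntegral.integral_of_le hle, intervalIntegral.integral_of_le hle,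
        integral_conj]
    rw [heq]
    have h5 : (∫ θ in (-Real.pi)..Real.pi,
        Complex.log (1 - z * (circleMap 0 R θ)⁻¹) * ((R:ℂ)^2 * (circleMap 0 R θ)⁻¹))
        = (R:ℂ)^2 * ∫ θ in (-Real.pi)..Real.pi,
            Complex.log (1 - z * (circleMap 0 R θ)⁻¹) * (circleMap 0 R θ)⁻¹ := by
      rw [← intervalIntegral.integral_const_mul]
      apply intervalIntegral.integral_congr
      intro θ _
      ring
    rw [h5, int_log_div R hR z hz, mul_zero, map_zero]
  rw [hc0]
  ring


end DiskLog

open DiskLog in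
/-- For every `x` in the open disk of radius `R` in `ℝ²` and each coordinate
index `i`, the integral of `ln |x - y| · y_i` over the boundary circle (with
respect to the one-dimensional Hausdorff/arclength measure) equals `-π R x_i`. -/
theorem disk_log_moment_integral (R : ℝ) (hR : 0 < R)
    (x : EuclideanSpace ℝ (Fin 2))
    (hx : x ∈ Metric.ball (0 : EuclideanSpace ℝ (Fin 2)) R) (i : Fin 2) :
    ∫ y in Metric.sphere (0 : EuclideanSpace ℝ (Fin 2)) R,
        Real.log ‖x - y‖ * y i ∂μH[1]
      = -(Real.pi * R * x i) := by
  set e := Complex.orthonormalBasisOneI.repr with he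
  set z : ℂ := e.symm x with hzdef
  have hez : e z = x := e.apply_symm_apply x
  have hz : ‖z‖ < R := by
    show ‖z‖ < R
    have h1 : ‖z‖ = ‖x‖ := by rw [← hez, e.norm_map]
    rw [h1]
    exact mem_ball_zero_iff.1 hx
  have hzb : z ∈ Metric.ball (0:ℂ) R := by
    simpa [Metric.mem_ball, Complex.dist_eq] using hz
  set φ : ℂ ≃ᵢ EuclideanSpace ℝ (Fin 2) := e.toIsometryEquiv with hφ
  have hmap : (μH[1] : Measure (EuclideanSpace ℝ (Fin 2))) = Measure.map φ μH[1] :=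
    (φ.map_hausdorffMeasure 1).symm
  have hrestrict : (μH[1] : Measure (EuclideanSpace ℝ (Fin 2))).restrict
        (Metric.sphere (0 : EuclideanSpace ℝ (Fin 2)) R)
      = Measure.map φ ((μH[1] : Measure ℂ).restrict (Metric.sphere (0:ℂ) R)) := by
    rw [hmap, Measure.restrict_map φ.continuous.measurable
      Metric.isClosed_sphere.measurableSet]
    congr 1
    rw [φ.preimage_sphere]
    congr 1
    have h0 : φ.symm (0 : EuclideanSpace ℝ (Fin 2)) = e.symm 0 := rfl
    rw [h0, map_zero]
  have hmeas : Measurable fun y : EuclideanSpace ℝ (Fin 2) => Real.log ‖x - y‖ * y i := by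
    apply Measurable.mul
    · exact Real.measurable_log.comp (continuous_const.sub continuous_id).norm.measurable
    · exact (EuclideanSpace.proj i).continuous.measurable
  rw [hrestrict, MeasureTheory.integral_map φ.continuous.measurable.aemeasurable
    hmeas.aestronglyMeasurable]
  have hfg : (fun w : ℂ => Real.log ‖x - φ w‖ * (φ w) i)
      = fun w : ℂ => Real.log (‖z - w‖) * (φ w) i := by
    funext w
    congr 2
    rw [← hez]
    have h1 : (φ w : EuclideanSpace ℝ (Fin 2)) = e w := rfl
    rw [h1, ← map_sub, e.norm_map]
  simp only [hfg]
  have hmeas2 : Measurable fun w : ℂ => Real.log (‖z - w‖) * (φ w) i := by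
    apply Measurable.mul
    · exact Real.measurable_log.comp
        (continuous_norm.comp (continuous_const.sub continuous_id)).measurable
    · exact ((EuclideanSpace.proj i).continuous.comp φ.continuous).measurable
  rw [integral_sphere_eq R hR _ hmeas2]
  -- now a 1D integral
  have hγc := continuous_circleMap 0 R
  have habsne : ∀ θ : ℝ, ‖z - circleMap 0 R θ‖ ≠ 0 := by
    intro θ
    rw [norm_ne_zero_iff, sub_ne_zero]
    exact (circleMap_ne_mem_ball hzb θ).symm
  have hlogC : Continuous fun θ : ℝ => Real.log (‖z - circleMap 0 R θ‖) := by
    apply continuous_iff_continuousAt.2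
    intro θ
    exact (continuous_norm.comp (continuous_const.sub hγc)).continuousAt.log (habsne θ)
  have hint : IntervalIntegrable
      (fun θ : ℝ => ((Real.log (‖z - circleMap 0 R θ‖) : ℝ) : ℂ)
        * circleMap 0 R θ) volume (-Real.pi) Real.pi :=
    ((Complex.continuous_ofReal.comp hlogC).mul hγc).intervalIntegrable _ _
  have hkey := key R hR z hz
  have hewi0 : ∀ w : ℂ, (φ w : EuclideanSpace ℝ (Fin 2)) (0 : Fin 2) = w.re := by
    intro w
    have h1 : (φ w : EuclideanSpace ℝ (Fin 2)) = e w := rfl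
    rw [h1, he, Complex.orthonormalBasisOneI_repr_apply]
    rfl
  have hewi1 : ∀ w : ℂ, (φ w : EuclideanSpace ℝ (Fin 2)) (1 : Fin 2) = w.im := by
    intro w
    have h1 : (φ w : EuclideanSpace ℝ (Fin 2)) = e w := rfl
    rw [h1, he, Complex.orthonormalBasisOneI_repr_apply]
    rfl
  have hx0 : x (0 : Fin 2) = z.re := by
    rw [← hez, he, Complex.orthonormalBasisOneI_repr_apply]
    rfl
  have hx1 : x (1 : Fin 2) = z.im := by
    rw [← hez, he, Complex.orthonormalBasisOneI_repr_apply]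
    rfl
  fin_cases i
  · -- real part
    have hre := Complex.reCLM.intervalIntegral_comp_comm hint
    rw [hkey] at hre
    simp only [Complex.reCLM_apply, Complex.re_ofReal_mul] at hre
    have hval : (-(Real.pi : ℂ) * z).re = -(Real.pi * z.re) := by
      rw [show -(Real.pi:ℂ) * z = ((-Real.pi : ℝ) : ℂ) * z by push_cast; ring,
        Complex.re_ofReal_mul]
      ring
    rw [hval] at hre
    have hgoal : (fun θ : ℝ => Real.log (‖z - circleMap 0 R θ‖)
        * (φ (circleMap 0 R θ) : EuclideanSpace ℝ (Fin 2)) (0 : Fin 2))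
        = fun θ : ℝ => Real.log (‖z - circleMap 0 R θ‖)
          * (circleMap 0 R θ).re := by
      funext θ
      rw [hewi0 (circleMap 0 R θ)]
    simp only [Fin.zero_eta, Fin.isValue]
    rw [hgoal, hre, hx0]
    ring
  · -- imaginary part
    have him := Complex.imCLM.intervalIntegral_comp_comm hint
    rw [hkey] at him
    simp only [Complex.imCLM_apply, Complex.im_ofReal_mul] at him
    have hval : (-(Real.pi : ℂ) * z).im = -(Real.pi * z.im) := by
      rw [show -(Real.pi:ℂ) * z = ((-Real.pi : ℝ) : ℂ) * z by push_cast; ring,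
        Complex.im_ofReal_mul]
      ring
    rw [hval] at him
    have hgoal : (fun θ : ℝ => Real.log (‖z - circleMap 0 R θ‖)
        * (φ (circleMap 0 R θ) : EuclideanSpace ℝ (Fin 2)) (1 : Fin 2))
        = fun θ : ℝ => Real.log (‖z - circleMap 0 R θ‖)
          * (circleMap 0 R θ).im := by
      funext θ
      rw [hewi1 (circleMap 0 R θ)]
    simp only [Fin.mk_one, Fin.isValue]
    rw [hgoal, him, hx1]
    ring
end
end

section
/- The 3×3 matrix Q = (Q_{ij})_{i,j=1}^{3} is diagonal: Q_{ij} = 0 whenever i ≠ j. Moreover Q₁₁ = Q₂₂. -/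
open MeasureTheory

/-- Partial derivative `∂f/∂y_l` of a scalar function on `ℝ²`. -/
noncomputable def pd (f : EuclideanSpace ℝ (Fin 2) → ℝ) (l : Fin 2)
    (y : EuclideanSpace ℝ (Fin 2)) : ℝ :=
  fderiv ℝ f y (EuclideanSpace.single l 1)

/-- The matrix-valued polynomial `A(x)` with entries
`a_{ij}(x) = δ_{ij}(−3|x|²/(32πμ²) − |x|²/(32π(λ+2μ)²)) − x_i x_j/(16π(λ+2μ)²) + x_i x_j/(16πμ²)`. -/
noncomputable def Amat (lam mu : ℝ) (x : EuclideanSpace ℝ (Fin 2)) :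
    Matrix (Fin 2) (Fin 2) ℝ := fun i j =>
  (if i = j then
      -3 * ‖x‖ ^ 2 / (32 * Real.pi * mu ^ 2)
        - ‖x‖ ^ 2 / (32 * Real.pi * (lam + 2 * mu) ^ 2)
    else 0)
    - x i * x j / (16 * Real.pi * (lam + 2 * mu) ^ 2)
    + x i * x j / (16 * Real.pi * mu ^ 2)

/-- The conormal-derivative kernel `N_A(x,y)`: its `j`-th column is the conormal
derivative, in the variable `y` with outward unit normal `ν(y) = y/R`, of the vector
field `y ↦ A(x−y)e_j`, i.e.
`N_A(x,y)e_j = λ div_y(A(x−y)e_j) ν(y) + μ (D_y(A(x−y)e_j) + D_y(A(x−y)e_j)ᵀ) ν(y)`. -/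
noncomputable def NAker (lam mu R : ℝ) (x y : EuclideanSpace ℝ (Fin 2)) :
    Matrix (Fin 2) (Fin 2) ℝ := fun i j =>
  lam * (∑ l : Fin 2, pd (fun z => Amat lam mu (x - z) l j) l y) * (y i / R)
    + mu * (∑ l : Fin 2,
        (pd (fun z => Amat lam mu (x - z) i j) l y
          + pd (fun z => Amat lam mu (x - z) l j) i y) * (y l / R))

/-- The boundary densities `f⁽¹⁾ = (2πR)^{-1/2}(1,0)`, `f⁽²⁾ = (2πR)^{-1/2}(0,1)`,
`f⁽³⁾ = (2πR³)^{-1/2}(x₂, −x₁)`. -/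
noncomputable def fB (R : ℝ) (i : Fin 3) (x : EuclideanSpace ℝ (Fin 2)) : Fin 2 → ℝ :=
  ![![1 / Real.sqrt (2 * Real.pi * R), 0],
    ![0, 1 / Real.sqrt (2 * Real.pi * R)],
    ![x 1 / Real.sqrt (2 * Real.pi * R ^ 3), -(x 0 / Real.sqrt (2 * Real.pi * R ^ 3))]] i

/-- The matrix `Q_{ij} = ∫_{∂D}∫_{∂D} f⁽ⁱ⁾(x) · (N_A(x,y) f⁽ʲ⁾(y)) dσ(y) dσ(x)`. -/
noncomputable def Qmat (lam mu R : ℝ) (i j : Fin 3) : ℝ :=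
  ∫ x in Metric.sphere (0 : EuclideanSpace ℝ (Fin 2)) R,
    (∫ y in Metric.sphere (0 : EuclideanSpace ℝ (Fin 2)) R,
      ∑ a : Fin 2, fB R i x a * ((NAker lam mu R x y).mulVec (fB R j y)) a
        ∂μH[1]) ∂μH[1]

/-! ### Auxiliary development -/

noncomputable abbrev EE := EuclideanSpace ℝ (Fin 2)

noncomputable def cA (lam mu : ℝ) : ℝ :=
  -3 / (32 * Real.pi * mu ^ 2) - 1 / (32 * Real.pi * (lam + 2 * mu) ^ 2)
noncomputable def cB (lam mu : ℝ) : ℝ :=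
  -(1 / (16 * Real.pi * (lam + 2 * mu) ^ 2)) + 1 / (16 * Real.pi * mu ^ 2)

lemma Amat_eq (lam mu : ℝ) (w : EE) (i j : Fin 2) :
    Amat lam mu w i j =
      (if i = j then cA lam mu else 0) * (w 0 ^ 2 + w 1 ^ 2) + cB lam mu * (w i * w j) := by
  have hn : ‖w‖ ^ 2 = w 0 ^ 2 + w 1 ^ 2 := by
    rw [EuclideanSpace.norm_eq, Real.sq_sqrt (by positivity)]
    simp [Fin.sum_univ_two, sq_abs]
  simp only [Amat, hn, cA, cB]
  split <;> ring

lemma pd_Amat (lam mu : ℝ) (x y : EE) (i j l : Fin 2) :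
    pd (fun z => Amat lam mu (x - z) i j) l y =
      (if i = j then cA lam mu else 0) * (2 * (y l - x l))
      + cB lam mu * ((if i = l then y j - x j else 0) + (if j = l then y i - x i else 0)) := by
  have hc : ∀ k : Fin 2, HasFDerivAt (fun z : EE => x k - z k)
      (-(PiLp.proj (𝕜 := ℝ) 2 (fun _ : Fin 2 => ℝ) k)) y :=
    fun k => ((PiLp.proj (𝕜 := ℝ) 2 (fun _ : Fin 2 => ℝ) k).hasFDerivAt).const_sub (x k)
  have h1 := ((((hc 0).mul (hc 0)).add ((hc 1).mul (hc 1))).const_mul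
      (if i = j then cA lam mu else 0)).add (((hc i).mul (hc j)).const_mul (cB lam mu))
  have h2 : (fun z : EE => Amat lam mu (x - z) i j) =
      (fun z : EE => (if i = j then cA lam mu else 0) *
        ((x 0 - z 0) * (x 0 - z 0) + (x 1 - z 1) * (x 1 - z 1))
        + cB lam mu * ((x i - z i) * (x j - z j))) := by
    funext z
    rw [Amat_eq]
    simp only [PiLp.sub_apply]
    split <;> ring
  rw [pd, h2, HasFDerivAt.fderiv (f := fun z : EE => (if i = j then cA lam mu else 0) *
          ((x 0 - z 0) * (x 0 - z 0) + (x 1 - z 1) * (x 1 - z 1))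
          + cB lam mu * ((x i - z i) * (x j - z j))) h1]
  clear h1 h2
  simp only [ContinuousLinearMap.add_apply, ContinuousLinearMap.coe_smul',
    ContinuousLinearMap.smul_apply, ContinuousLinearMap.neg_apply, Pi.smul_apply,
    PiLp.proj_apply, EuclideanSpace.single_apply, smul_eq_mul]
  revert i j l
  simp only [Fin.forall_fin_two]
  refine ⟨⟨⟨?_, ?_⟩, ⟨?_, ?_⟩⟩, ⟨⟨?_, ?_⟩, ⟨?_, ?_⟩⟩⟩ <;>
    simp only [reduceIte, show ((1 : Fin 2) = 0) = False from by simp [Fin.ext_iff],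
      show ((0 : Fin 2) = 1) = False from by simp [Fin.ext_iff], if_false] <;> ring1

/-- Closed form of the partial derivatives appearing in `NAker`. -/
noncomputable def pf (lam mu : ℝ) (x y : EE) (a b l : Fin 2) : ℝ :=
  (if a = b then cA lam mu else 0) * (2 * (y l - x l))
  + cB lam mu * ((if a = l then y b - x b else 0) + (if b = l then y a - x a else 0))

lemma NAker_eq (lam mu R : ℝ) (x y : EE) (i j : Fin 2) :
    NAker lam mu R x y i j =
      lam * (pf lam mu x y 0 j 0 + pf lam mu x y 1 j 1) * (y i / R)
      + mu * ((pf lam mu x y i j 0 + pf lam mu x y 0 j i) * (y 0 / R)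
            + (pf lam mu x y i j 1 + pf lam mu x y 1 j i) * (y 1 / R)) := by
  simp only [NAker, Fin.sum_univ_two, pd_Amat, pf]

/-- The integrand of `Qmat`. -/
noncomputable def itg (lam mu R : ℝ) (i j : Fin 3) (x y : EE) : ℝ :=
  ∑ a : Fin 2, fB R i x a * ((NAker lam mu R x y).mulVec (fB R j y)) a

lemma Qmat_eq (lam mu R : ℝ) (i j : Fin 3) :
    Qmat lam mu R i j =
      ∫ x in Metric.sphere (0 : EE) R,
        (∫ y in Metric.sphere (0 : EE) R, itg lam mu R i j x y ∂μH[1]) ∂μH[1] := rfl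

lemma sphere_comp (R : ℝ) (e : EE ≃ₗᵢ[ℝ] EE) (f : EE → ℝ) :
    (∫ x in Metric.sphere (0 : EE) R, f x ∂μH[1])
      = ∫ x in Metric.sphere (0 : EE) R, f (e x) ∂μH[1] := by
  have hmp : MeasurePreserving e (μH[1] : Measure EE) μH[1] := by
    have := e.toIsometryEquiv.measurePreserving_hausdorffMeasure 1 (X := EE) (Y := EE)
    simpa [LinearIsometryEquiv.coe_toIsometryEquiv] using this
  have hemb : MeasurableEmbedding (⇑e) := by
    have := e.toHomeomorph.measurableEmbedding
    simpa using this
  have hpre : (⇑e) ⁻¹' (Metric.sphere (0 : EE) R) = Metric.sphere (0 : EE) R := by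
    ext z
    simp [mem_sphere_iff_norm]
  have h := hmp.setIntegral_preimage_emb hemb f (Metric.sphere (0 : EE) R)
  rw [hpre] at h
  exact h.symm

lemma double_comp (R : ℝ) (e : EE ≃ₗᵢ[ℝ] EE) (F : EE → EE → ℝ) :
    (∫ x in Metric.sphere (0 : EE) R,
        (∫ y in Metric.sphere (0 : EE) R, F x y ∂μH[1]) ∂μH[1])
      = ∫ x in Metric.sphere (0 : EE) R,
          (∫ y in Metric.sphere (0 : EE) R, F (e x) (e y) ∂μH[1]) ∂μH[1] := by
  rw [sphere_comp R e (fun x => ∫ y in Metric.sphere (0 : EE) R, F x y ∂μH[1])]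
  refine integral_congr_ae (Filter.Eventually.of_forall fun x => ?_)
  exact sphere_comp R e (fun y => F (e x) y)

lemma Qmat_eq_zero_of (lam mu R : ℝ) (e : EE ≃ₗᵢ[ℝ] EE) (i j : Fin 3)
    (h : ∀ x y : EE, itg lam mu R i j (e x) (e y) = - itg lam mu R i j x y) :
    Qmat lam mu R i j = 0 := by
  have h1 : Qmat lam mu R i j = - Qmat lam mu R i j := by
    conv_lhs => rw [Qmat_eq, double_comp R e]
    simp only [h, integral_neg]
    rw [← Qmat_eq]
  linarith

lemma Qmat_eq_of (lam mu R : ℝ) (e : EE ≃ₗᵢ[ℝ] EE) (i j i' j' : Fin 3)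
    (h : ∀ x y : EE, itg lam mu R i j (e x) (e y) = itg lam mu R i' j' x y) :
    Qmat lam mu R i j = Qmat lam mu R i' j' := by
  rw [Qmat_eq, double_comp R e]
  simp only [h]
  rw [← Qmat_eq]

/-! ### Symmetries -/

noncomputable def negE : EE ≃ₗᵢ[ℝ] EE := LinearIsometryEquiv.neg ℝ
noncomputable def flipE : EE ≃ₗᵢ[ℝ] EE :=
  LinearIsometryEquiv.piLpCongrRight 2
    (fun i : Fin 2 => if i = 1 then LinearIsometryEquiv.neg ℝ else LinearIsometryEquiv.refl ℝ ℝ)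
noncomputable def swapE : EE ≃ₗᵢ[ℝ] EE :=
  LinearIsometryEquiv.piLpCongrLeft 2 ℝ ℝ (Equiv.swap 0 1)

lemma negE_apply0 (x : EE) : (negE x) 0 = -(x 0) := rfl
lemma negE_apply1 (x : EE) : (negE x) 1 = -(x 1) := rfl
lemma flipE_apply0 (x : EE) : (flipE x) 0 = x 0 := rfl
lemma flipE_apply1 (x : EE) : (flipE x) 1 = -(x 1) := rfl
lemma swapE_apply0 (x : EE) : (swapE x) 0 = x 1 := rfl
lemma swapE_apply1 (x : EE) : (swapE x) 1 = x 0 := rfl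

section pointwise

variable (lam mu R : ℝ) (x y : EE)

lemma key01 : itg lam mu R 0 1 (flipE x) (flipE y) = - itg lam mu R 0 1 x y := by
  simp only [itg, Fin.sum_univ_two, Matrix.mulVec, dotProduct, NAker_eq, pf, fB,
    Matrix.cons_val_zero, Matrix.cons_val_one, Matrix.head_cons, Matrix.cons_val_two,
    Matrix.tail_cons, flipE_apply0, flipE_apply1, reduceIte,
    show ((1 : Fin 2) = 0) = False from by simp [Fin.ext_iff],
    show ((0 : Fin 2) = 1) = False from by simp [Fin.ext_iff], if_false]
  ring1

lemma key10 : itg lam mu R 1 0 (flipE x) (flipE y) = - itg lam mu R 1 0 x y := by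
  simp only [itg, Fin.sum_univ_two, Matrix.mulVec, dotProduct, NAker_eq, pf, fB,
    Matrix.cons_val_zero, Matrix.cons_val_one, Matrix.head_cons, Matrix.cons_val_two,
    Matrix.tail_cons, flipE_apply0, flipE_apply1, reduceIte,
    show ((1 : Fin 2) = 0) = False from by simp [Fin.ext_iff],
    show ((0 : Fin 2) = 1) = False from by simp [Fin.ext_iff], if_false]
  ring1

lemma key02 : itg lam mu R 0 2 (negE x) (negE y) = - itg lam mu R 0 2 x y := by
  simp only [itg, Fin.sum_univ_two, Matrix.mulVec, dotProduct, NAker_eq, pf, fB,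
    Matrix.cons_val_zero, Matrix.cons_val_one, Matrix.head_cons, Matrix.cons_val_two,
    Matrix.tail_cons, negE_apply0, negE_apply1, reduceIte,
    show ((1 : Fin 2) = 0) = False from by simp [Fin.ext_iff],
    show ((0 : Fin 2) = 1) = False from by simp [Fin.ext_iff], if_false]
  ring1

lemma key20 : itg lam mu R 2 0 (negE x) (negE y) = - itg lam mu R 2 0 x y := by
  simp only [itg, Fin.sum_univ_two, Matrix.mulVec, dotProduct, NAker_eq, pf, fB,
    Matrix.cons_val_zero, Matrix.cons_val_one, Matrix.head_cons, Matrix.cons_val_two,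
    Matrix.tail_cons, negE_apply0, negE_apply1, reduceIte,
    show ((1 : Fin 2) = 0) = False from by simp [Fin.ext_iff],
    show ((0 : Fin 2) = 1) = False from by simp [Fin.ext_iff], if_false]
  ring1

lemma key12 : itg lam mu R 1 2 (negE x) (negE y) = - itg lam mu R 1 2 x y := by
  simp only [itg, Fin.sum_univ_two, Matrix.mulVec, dotProduct, NAker_eq, pf, fB,
    Matrix.cons_val_zero, Matrix.cons_val_one, Matrix.head_cons, Matrix.cons_val_two,
    Matrix.tail_cons, negE_apply0, negE_apply1, reduceIte,
    show ((1 : Fin 2) = 0) = False from by simp [Fin.ext_iff],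
    show ((0 : Fin 2) = 1) = False from by simp [Fin.ext_iff], if_false]
  ring1

lemma key21 : itg lam mu R 2 1 (negE x) (negE y) = - itg lam mu R 2 1 x y := by
  simp only [itg, Fin.sum_univ_two, Matrix.mulVec, dotProduct, NAker_eq, pf, fB,
    Matrix.cons_val_zero, Matrix.cons_val_one, Matrix.head_cons, Matrix.cons_val_two,
    Matrix.tail_cons, negE_apply0, negE_apply1, reduceIte,
    show ((1 : Fin 2) = 0) = False from by simp [Fin.ext_iff],
    show ((0 : Fin 2) = 1) = False from by simp [Fin.ext_iff], if_false]
  ring1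

lemma key00 : itg lam mu R 0 0 (swapE x) (swapE y) = itg lam mu R 1 1 x y := by
  simp only [itg, Fin.sum_univ_two, Matrix.mulVec, dotProduct, NAker_eq, pf, fB,
    Matrix.cons_val_zero, Matrix.cons_val_one, Matrix.head_cons, Matrix.cons_val_two,
    Matrix.tail_cons, swapE_apply0, swapE_apply1, reduceIte,
    show ((1 : Fin 2) = 0) = False from by simp [Fin.ext_iff],
    show ((0 : Fin 2) = 1) = False from by simp [Fin.ext_iff], if_false]
  ring1

end pointwise

/-- The `3×3` matrix `Q` is diagonal (`Q_{ij} = 0` for `i ≠ j`), and `Q₁₁ = Q₂₂`. -/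
theorem Qmat_diagonal (R lam mu : ℝ) (hR : 0 < R)
    (hmu : 0 < mu) (hlm : 0 < lam + mu) :
    (∀ i j : Fin 3, i ≠ j → Qmat lam mu R i j = 0)
    ∧ Qmat lam mu R 0 0 = Qmat lam mu R 1 1 := by
  constructor
  · intro i j hij
    fin_cases i <;> fin_cases j <;>
      first
        | exact absurd rfl hij
        | exact Qmat_eq_zero_of lam mu R flipE 0 1 (key01 lam mu R)
        | exact Qmat_eq_zero_of lam mu R flipE 1 0 (key10 lam mu R)
        | exact Qmat_eq_zero_of lam mu R negE 0 2 (key02 lam mu R)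
        | exact Qmat_eq_zero_of lam mu R negE 2 0 (key20 lam mu R)
        | exact Qmat_eq_zero_of lam mu R negE 1 2 (key12 lam mu R)
        | exact Qmat_eq_zero_of lam mu R negE 2 1 (key21 lam mu R)
  · exact Qmat_eq_of lam mu R swapE 0 0 1 1 (key00 lam mu R)
end
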